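/- Let z₁, z₂ > 0 with z₁ ≠ z₂. The equation (2z - U₁)(2z - U₂) = U₁U₂·e^{2(x₁-x₂)z} in z > 0, with U₁ > 0, U₂ > 0 and x₂ - x₁ > 1/U₁ + 1/U₂, has exactly two positive solutions. -/

import Mathlib

/-- If `U₁, U₂ > 0` and `x₂ - x₁ > 1/U₁ + 1/U₂`, then the equation
`(2z - U₁)(2z - U₂) = U₁U₂·e^{2(x₁-x₂)z}` has exactly two positive solutions. -/
theorem two_bound_states (U₁ U₂ x₁ x₂ : ℝ) (hU₁ : 0 < U₁) (hU₂ : 0 < U₂)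
    (hx : x₂ - x₁ > 1 / U₁ + 1 / U₂) :
    {z : ℝ | 0 < z ∧
      (2 * z - U₁) * (2 * z - U₂) = U₁ * U₂ * Real.exp (2 * (x₁ - x₂) * z)}.encard = 2 := by
  set c : ℝ := 2 * (x₁ - x₂) with hc_def
  have hUU : (0:ℝ) < 1/U₁ + 1/U₂ := by positivity
  have hc : c < 0 := by
    have : x₁ - x₂ < 0 := by linarith
    nlinarith
  set g : ℝ → ℝ := fun z => (2*z - U₁)*(2*z - U₂) - U₁*U₂*Real.exp (c*z) with hg_def
  set g1 : ℝ → ℝ := fun z => (8*z - 2*(U₁+U₂)) - U₁*U₂*(Real.exp (c*z) * c) with hg1_def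
  set g2 : ℝ → ℝ := fun z => 8 - U₁*U₂*(Real.exp (c*z) * c * c) with hg2_def
  have hde : ∀ z : ℝ, HasDerivAt (fun z => Real.exp (c*z)) (Real.exp (c*z) * c) z := by
    intro z
    simpa using ((hasDerivAt_id z).const_mul c).exp
  have hd1 : ∀ z : ℝ, HasDerivAt g (g1 z) z := by
    intro z
    have hp : HasDerivAt (fun z : ℝ => (2*z - U₁)*(2*z - U₂)) (8*z - 2*(U₁+U₂)) z := by
      have h1 : HasDerivAt (fun z : ℝ => 2*z - U₁) 2 z := by
        simpa using ((hasDerivAt_id z).const_mul 2).sub_const U₁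
      have h2 : HasDerivAt (fun z : ℝ => 2*z - U₂) 2 z := by
        simpa using ((hasDerivAt_id z).const_mul 2).sub_const U₂
      have := h1.mul h2
      exact this.congr_deriv (by ring)
    exact hp.sub ((hde z).const_mul (U₁*U₂))
  have hd2 : ∀ z : ℝ, HasDerivAt g1 (g2 z) z := by
    intro z
    have hp : HasDerivAt (fun z : ℝ => 8*z - 2*(U₁+U₂)) 8 z := by
      simpa using ((hasDerivAt_id z).const_mul 8).sub_const (2*(U₁+U₂))
    have he : HasDerivAt (fun z => U₁*U₂*(Real.exp (c*z) * c)) (U₁*U₂*(Real.exp (c*z)*c*c)) z := by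
      exact ((hde z).mul_const c).const_mul (U₁*U₂)
    exact hp.sub he
  have hgc : Continuous g := by
    rw [continuous_iff_continuousAt]; exact fun z => (hd1 z).continuousAt
  have hg1c : Continuous g1 := by
    rw [continuous_iff_continuousAt]; exact fun z => (hd2 z).continuousAt
  have hdg : deriv g = g1 := funext fun z => (hd1 z).deriv
  have hdg1 : deriv g1 = g2 := funext fun z => (hd2 z).deriv
  have hmono : StrictMono g2 := by
    intro a b hab
    have hexp : Real.exp (c*b) < Real.exp (c*a) := by
      apply Real.exp_lt_exp.2; nlinarith
    have hcc : 0 < c*c := mul_pos_of_neg_of_neg hc hc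
    have h3 : 0 < U₁*U₂*(c*c) := mul_pos (mul_pos hU₁ hU₂) hcc
    simp only [hg2_def]
    nlinarith [mul_lt_mul_of_pos_left hexp h3]
  have hg0 : g 0 = 0 := by simp [hg_def]
  -- uniqueness: no three distinct positive zeros
  have key : ∀ p q r : ℝ, 0 < p → p < q → q < r → g p = 0 → g q = 0 → g r = 0 → False := by
    intro p q r hp hpq hqr hgp hgq hgr
    obtain ⟨s₁, hs₁, hds₁⟩ := exists_deriv_eq_zero hp hgc.continuousOn (hg0.trans hgp.symm)
    obtain ⟨s₂, hs₂, hds₂⟩ := exists_deriv_eq_zero hpq hgc.continuousOn (hgp.trans hgq.symm)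
    obtain ⟨s₃, hs₃, hds₃⟩ := exists_deriv_eq_zero hqr hgc.continuousOn (hgq.trans hgr.symm)
    rw [hdg] at hds₁ hds₂ hds₃
    have h12 : s₁ < s₂ := lt_trans hs₁.2 hs₂.1
    have h23 : s₂ < s₃ := lt_trans hs₂.2 hs₃.1
    obtain ⟨t₁, ht₁, hdt₁⟩ := exists_deriv_eq_zero h12 hg1c.continuousOn (hds₁.trans hds₂.symm)
    obtain ⟨t₂, ht₂, hdt₂⟩ := exists_deriv_eq_zero h23 hg1c.continuousOn (hds₂.trans hds₃.symm)
    rw [hdg1] at hdt₁ hdt₂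
    have : g2 t₁ < g2 t₂ := hmono (lt_trans ht₁.2 ht₂.1)
    rw [hdt₁, hdt₂] at this
    exact lt_irrefl 0 this
  -- existence
  set m : ℝ := min U₁ U₂ with hm_def
  have hm0 : 0 < m := lt_min hU₁ hU₂
  have hgm : g (m/2) < 0 := by
    have hz : (2*(m/2) - U₁)*(2*(m/2) - U₂) = 0 := by
      rcases le_total U₁ U₂ with h | h
      · rw [hm_def, min_eq_left h]; ring
      · rw [hm_def, min_eq_right h]; ring
    have : g (m/2) = -(U₁*U₂*Real.exp (c*(m/2))) := by
      simp only [hg_def]; rw [hz]; ring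
    rw [this]
    have h4 : 0 < U₁*U₂*Real.exp (c*(m/2)) := by positivity
    linarith
  set M : ℝ := (U₁+U₂)/2 with hM_def
  have hmM : m/2 < M := by
    have h1 : m ≤ U₁ := min_le_left _ _
    have h2 : m ≤ U₂ := min_le_right _ _
    rw [hM_def]; linarith
  have hgM : 0 < g M := by
    have hz : (2*M - U₁)*(2*M - U₂) = U₁*U₂ := by rw [hM_def]; ring
    have hexp : Real.exp (c*M) < 1 := by
      rw [Real.exp_lt_one_iff]
      have hM0 : 0 < M := by rw [hM_def]; linarith
      nlinarith
    simp only [hg_def]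
    rw [hz]
    have h5 := mul_lt_mul_of_pos_left hexp (mul_pos hU₁ hU₂)
    rw [mul_one] at h5
    linarith
  -- positive value near 0
  have hg10 : 0 < g1 0 := by
    have h := mul_lt_mul_of_pos_right hx (by positivity : (0:ℝ) < U₁*U₂)
    have he : (1/U₁ + 1/U₂) * (U₁*U₂) = U₂ + U₁ := by field_simp
    rw [he] at h
    simp only [hg1_def]
    rw [show c*(0:ℝ) = 0 from mul_zero c, Real.exp_zero, one_mul, hc_def]
    nlinarith [h]
  obtain ⟨ε, hε⟩ : ∃ ε : ℝ, 0 < ε ∧ ε < m/2 ∧ 0 < g ε := by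
    have hslope : Filter.Tendsto (slope g 0) (nhdsWithin 0 {(0:ℝ)}ᶜ) (nhds (g1 0)) :=
      hasDerivAt_iff_tendsto_slope.1 (hd1 0)
    have hsub : Set.Ioi (0:ℝ) ⊆ {(0:ℝ)}ᶜ := fun x hx => by
      simp [Set.mem_Ioi] at hx ⊢; exact ne_of_gt hx
    have h2 : Filter.Tendsto (slope g 0) (nhdsWithin 0 (Set.Ioi (0:ℝ))) (nhds (g1 0)) :=
      hslope.mono_left (nhdsWithin_mono _ hsub)
    have hev : ∀ᶠ x in nhdsWithin 0 (Set.Ioi (0:ℝ)), 0 < slope g 0 x :=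
      h2.eventually (eventually_gt_nhds hg10)
    have hmem : Set.Ioo (0:ℝ) (m/2) ∈ nhdsWithin 0 (Set.Ioi (0:ℝ)) :=
      Ioo_mem_nhdsGT_of_mem ⟨le_refl 0, by linarith⟩
    obtain ⟨x, hx1, hx2⟩ := (hev.and hmem).exists
    refine ⟨x, hx2.1, hx2.2, ?_⟩
    have hx0 : 0 < x := hx2.1
    have : slope g 0 x = g x / x := by
      simp [slope, hg0, div_eq_inv_mul]
    rw [this] at hx1
    have := mul_pos hx1 hx0
    rwa [div_mul_cancel₀ _ (ne_of_gt hx0)] at this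
  obtain ⟨hε0, hεm, hgε⟩ := hε
  obtain ⟨a, ha, hga⟩ := intermediate_value_Ioo' (le_of_lt hεm) hgc.continuousOn
    (show (0:ℝ) ∈ Set.Ioo (g (m/2)) (g ε) from ⟨hgm, hgε⟩)
  obtain ⟨b, hb, hgb⟩ := intermediate_value_Ioo (le_of_lt hmM) hgc.continuousOn
    (show (0:ℝ) ∈ Set.Ioo (g (m/2)) (g M) from ⟨hgm, hgM⟩)
  have ha0 : 0 < a := lt_trans hε0 ha.1
  have hb0 : 0 < b := lt_trans (by linarith : (0:ℝ) < m/2) hb.1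
  have hab : a < b := lt_trans ha.2 hb.1
  have hga0 : g a = 0 := hga
  have hgb0 : g b = 0 := hgb
  have hset : {z : ℝ | 0 < z ∧
      (2 * z - U₁) * (2 * z - U₂) = U₁ * U₂ * Real.exp (c * z)} = {a, b} := by
    ext z
    simp only [Set.mem_setOf_eq, Set.mem_insert_iff, Set.mem_singleton_iff]
    constructor
    · rintro ⟨hz0, hzeq⟩
      have hgz : g z = 0 := by
        simp only [hg_def]
        exact sub_eq_zero_of_eq hzeq
      by_contra hcon
      push_neg at hcon
      obtain ⟨hza, hzb⟩ := hcon
      rcases lt_trichotomy z a with h1 | h1 | h1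
      · exact key z a b hz0 h1 hab hgz hga0 hgb0
      · exact hza h1
      · rcases lt_trichotomy z b with h2 | h2 | h2
        · exact key a z b ha0 h1 h2 hga0 hgz hgb0
        · exact hzb h2
        · exact key a b z ha0 hab h2 hga0 hgb0 hgz
    · rintro (rfl | rfl)
      · exact ⟨ha0, sub_eq_zero.mp hga0⟩
      · exact ⟨hb0, sub_eq_zero.mp hgb0⟩
  rw [hset]
  exact Set.encard_pair (ne_of_lt hab)
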